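/- Let f : K → L be a map of simplicial schemes (or simplicial objects in any category with finite limits) such that: (1) f_p : K_p → L_p is an isomorphism for all p < n, and (2) the canonical maps K → cosk_n K and L → cosk_n L are isomorphisms. Then for every m, the square expressing K_m and L_m as equalizers over the category D_m of injections [i] → [m] with i ≤ n is such that the canonical map K_m → L_m ×_{∏_{φ∈D_m} L_φ} ∏_{φ∈D_m} K_φ is an isomorphism; consequently each f_m is a base change (pullback) of a finite product of copies of f_n and of isomorphisms. -/

import Mathlib

open CategoryTheory CategoryTheory.Limits Opposite

namespace Stmt6

/-- The objects of the category `D_m`: injective order-preserving maps `φ : [i] → ⦋m⦌`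
with `i ≤ n`. -/
def Phi (n m : ℕ) : Type :=
  Σ i : Fin (n + 1), { f : Fin ((i : ℕ) + 1) → Fin (m + 1) // Monotone f ∧ Function.Injective f }

instance (n m : ℕ) : Finite (Phi n m) := by unfold Phi; exact inferInstance
noncomputable instance (n m : ℕ) : Fintype (Phi n m) := Fintype.ofFinite _
noncomputable instance (n m : ℕ) : DecidableEq (Phi n m) := Classical.decEq _


variable {C : Type*} [Category C] [HasFiniteLimits C] (n : ℕ)
  [∀ (F : (SimplexCategory.Truncated n)ᵒᵖ ⥤ C),
    (SimplexCategory.Truncated.inclusion n).op.HasRightKanExtension F]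
  {K L : CategoryTheory.SimplicialObject C} (f : K ⟶ L) (m : ℕ)

/-- The canonical map `K_m ⟶ ∏_{φ ∈ D_m} K_φ` given by the simplicial structure maps. -/
noncomputable def kappa (K : CategoryTheory.SimplicialObject C) :
    K.obj (op (SimplexCategory.mk m)) ⟶
      (∏ᶜ fun φ : Phi n m => K.obj (op (SimplexCategory.mk (φ.1 : ℕ)))) :=
  Pi.lift fun φ => K.map (SimplexCategory.mkHom ⟨φ.2.1, φ.2.2.1⟩).op

/-- The map `∏_φ K_φ ⟶ ∏_φ L_φ` induced by `f` componentwise. -/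
noncomputable def prodMap :
    (∏ᶜ fun φ : Phi n m => K.obj (op (SimplexCategory.mk (φ.1 : ℕ)))) ⟶
      (∏ᶜ fun φ : Phi n m => L.obj (op (SimplexCategory.mk (φ.1 : ℕ)))) :=
  Pi.lift fun φ => Pi.π _ φ ≫ f.app (op (SimplexCategory.mk (φ.1 : ℕ)))


section Infra
open SimplexCategory Simplicial


/-! ### Finiteness infrastructure -/

noncomputable instance instFintypeHomSimplex (a b : SimplexCategory) : Fintype (a ⟶ b) :=
  Fintype.ofInjective
    (fun u => (u.toOrderHom : Fin (a.len + 1) → Fin (b.len + 1)))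
    (fun u v h => SimplexCategory.Hom.ext' u v (DFunLike.coe_injective h))

instance instFiniteHomSimplexOp (a b : SimplexCategoryᵒᵖ) : Finite (a ⟶ b) :=
  Finite.of_injective (fun u => u.unop) (fun _ _ h => Quiver.Hom.unop_inj h)

instance instFiniteTruncated (n : ℕ) : Finite (SimplexCategory.Truncated n) := by
  apply Finite.of_injective (fun Δ => (⟨Δ.obj.len, Nat.lt_succ_of_le Δ.property⟩ : Fin (n + 1)))
  intro Δ Δ' h
  have h2 : Δ.obj.len = Δ'.obj.len := congrArg Fin.val h
  cases Δ; cases Δ'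
  simp only at h2
  cases SimplexCategory.ext h2
  rfl

instance instFiniteTruncatedOp (n : ℕ) : Finite (SimplexCategory.Truncated n)ᵒᵖ :=
  Finite.of_equiv _ Opposite.equivToOpposite

instance instFiniteTruncatedHom (n : ℕ) (a b : SimplexCategory.Truncated n) : Finite (a ⟶ b) :=
  Finite.of_injective (fun u => u.hom) (fun _ _ h => ObjectProperty.hom_ext _ h)

instance instFiniteTruncatedOpHom (n : ℕ) (a b : (SimplexCategory.Truncated n)ᵒᵖ) :
    Finite (a ⟶ b) :=
  Finite.of_injective (fun u => u.unop) (fun _ _ h => Quiver.Hom.unop_inj h)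

instance instFiniteSA (n : ℕ) (Y : SimplexCategoryᵒᵖ) :
    Finite (StructuredArrow Y (SimplexCategory.Truncated.inclusion n).op) := by
  apply Finite.of_injective
    (fun (g : StructuredArrow Y (SimplexCategory.Truncated.inclusion n).op) =>
      (⟨g.right, g.hom⟩ :
      Σ r : (SimplexCategory.Truncated n)ᵒᵖ,
        (Y ⟶ (SimplexCategory.Truncated.inclusion n).op.obj r)))
  intro g g' h
  have := congrArg
    (fun (p : Σ r : (SimplexCategory.Truncated n)ᵒᵖ,
        (Y ⟶ (SimplexCategory.Truncated.inclusion n).op.obj r)) => StructuredArrow.mk p.2) h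
  simpa using (StructuredArrow.eq_mk g).trans (this.trans (StructuredArrow.eq_mk g').symm)

instance instFiniteSAHom (n : ℕ) (Y : SimplexCategoryᵒᵖ)
    (a b : StructuredArrow Y (SimplexCategory.Truncated.inclusion n).op) : Finite (a ⟶ b) := by
  apply Finite.of_injective (fun u => u.right)
  intro u v h
  ext
  exact h

noncomputable instance instFinCatSA (n : ℕ) (Y : SimplexCategoryᵒᵖ) :
    FinCategory (StructuredArrow Y (SimplexCategory.Truncated.inclusion n).op) where
  fintypeObj := Fintype.ofFinite _
  fintypeHom _ _ := Fintype.ofFinite _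

variable {C : Type*} [Category C] [HasFiniteLimits C]

instance instHasPointwise (n : ℕ) (F : (SimplexCategory.Truncated n)ᵒᵖ ⥤ C) :
    (SimplexCategory.Truncated.inclusion n).op.HasPointwiseRightKanExtension F :=
  fun _ => inferInstance


end Infra

section Fact
open SimplexCategory Simplicial
def homOf {n m : ℕ} (φ : Phi n m) : (⦋(φ.1 : ℕ)⦌ : SimplexCategory) ⟶ ⦋m⦌ :=
  SimplexCategory.mkHom ⟨φ.2.1, φ.2.2.1⟩

instance homOf_mono {n m : ℕ} (φ : Phi n m) : Mono (homOf φ) := by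
  rw [SimplexCategory.mono_iff_injective]
  exact φ.2.2.2

lemma homOf_data {n m : ℕ} {i : Fin (n + 1)}
    (d d' : { f : Fin ((i : ℕ) + 1) → Fin (m + 1) // Monotone f ∧ Function.Injective f })
    (h : homOf ⟨i, d⟩ = homOf ⟨i, d'⟩) : d = d' := by
  apply Subtype.ext
  exact congrArg (fun u => ((SimplexCategory.Hom.toOrderHom u : _ →o _) : _ → _)) h

lemma exists_fac {n m : ℕ} {Δ' : SimplexCategory} (h : Δ'.len ≤ n) (ψ : Δ' ⟶ ⦋m⦌) :
    ∃ (φ : Phi n m) (e : Δ' ⟶ (⦋(φ.1 : ℕ)⦌ : SimplexCategory)), Epi e ∧ e ≫ homOf φ = ψ := by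
  suffices H : ∀ (Δ'' : SimplexCategory) (e : Δ' ⟶ Δ'') (i : Δ'' ⟶ ⦋m⦌), Epi e → Mono i →
      e ≫ i = ψ → ∃ (φ : Phi n m) (e : Δ' ⟶ (⦋(φ.1 : ℕ)⦌ : SimplexCategory)),
        Epi e ∧ e ≫ homOf φ = ψ by
    exact H (image ψ) (factorThruImage ψ) (image.ι ψ) inferInstance inferInstance (image.fac ψ)
  intro Δ''
  induction Δ'' using SimplexCategory.rec with
  | _ j =>
    intro e i he hi hw
    have hj : j ≤ n := le_trans (SimplexCategory.len_le_of_epi e) h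
    refine ⟨⟨⟨j, Nat.lt_succ_of_le hj⟩,
      ⟨(i.toOrderHom : _ → _), i.toOrderHom.monotone,
        SimplexCategory.mono_iff_injective.mp hi⟩⟩, e, he, ?_⟩
    have : homOf ⟨⟨j, Nat.lt_succ_of_le hj⟩,
        ⟨(i.toOrderHom : _ → _), i.toOrderHom.monotone,
          SimplexCategory.mono_iff_injective.mp hi⟩⟩ = i :=
      SimplexCategory.Hom.ext' _ _ (OrderHom.ext _ _ rfl)
    rw [this, hw]

lemma fac_unique {n m : ℕ} {Δ' : SimplexCategory} (ψ : Δ' ⟶ ⦋m⦌) (φ φ' : Phi n m)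
    (e : Δ' ⟶ (⦋(φ.1 : ℕ)⦌ : SimplexCategory)) (e' : Δ' ⟶ (⦋(φ'.1 : ℕ)⦌ : SimplexCategory))
    (he : Epi e) (he' : Epi e')
    (hw : e ≫ homOf φ = ψ) (hw' : e' ≫ homOf φ' = ψ) :
    ∃ (hφ : φ = φ'), e ≫ eqToHom (by rw [hφ]) = e' := by
  haveI := he; haveI := he'
  have h1 : image ψ = (⦋(φ.1 : ℕ)⦌ : SimplexCategory) := SimplexCategory.image_eq hw
  have h2 : image ψ = (⦋(φ'.1 : ℕ)⦌ : SimplexCategory) := SimplexCategory.image_eq hw'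
  have hval : (φ.1 : ℕ) = (φ'.1 : ℕ) := by
    have := congrArg SimplexCategory.len (h1.symm.trans h2)
    simpa using this
  obtain ⟨i1, d⟩ := φ
  obtain ⟨i2, d'⟩ := φ'
  have hi : i1 = i2 := Fin.ext hval
  subst hi
  haveI := homOf_mono (⟨i1, d⟩ : Phi n m); haveI := homOf_mono (⟨i1, d'⟩ : Phi n m)
  have hι : image.ι ψ = eqToHom h1 ≫ homOf ⟨i1, d⟩ :=
    SimplexCategory.image_ι_eq (e := e ≫ eqToHom h1.symm) (by simp [hw])
  have hι' : image.ι ψ = eqToHom h1 ≫ homOf ⟨i1, d'⟩ :=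
    SimplexCategory.image_ι_eq (e := e' ≫ eqToHom h1.symm) (by simp [hw'])
  have hd : d = d' := homOf_data d d' ((cancel_epi (eqToHom h1)).mp (hι.symm.trans hι'))
  subst hd
  refine ⟨rfl, ?_⟩
  have f1 : factorThruImage ψ = e ≫ eqToHom h1.symm :=
    SimplexCategory.factorThruImage_eq (i := eqToHom h1 ≫ homOf ⟨i1, d⟩) (by simp [hw])
  have f2 : factorThruImage ψ = e' ≫ eqToHom h1.symm :=
    SimplexCategory.factorThruImage_eq (i := eqToHom h1 ≫ homOf ⟨i1, d⟩) (by simp [hw'])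
  have := f1.symm.trans f2
  simpa using (cancel_mono (eqToHom h1.symm)).mp this


end Fact


section Leg
open SimplexCategory Simplicial

variable {n m : ℕ} {X : C}
  (b : X ⟶ ∏ᶜ fun φ : Phi n m => K.obj (op (SimplexCategory.mk (φ.1 : ℕ))))

/-- The leg of the cone on `X` indexed by an arbitrary `ψ : Δ' ⟶ ⦋m⦌` with `Δ'.len ≤ n`. -/
noncomputable def leg {Δ' : SimplexCategory} (h : Δ'.len ≤ n) (ψ : Δ' ⟶ ⦋m⦌) :
    X ⟶ K.obj (op Δ') :=
  b ≫ Pi.π _ (exists_fac h ψ).choose ≫ K.map ((exists_fac h ψ).choose_spec.choose).op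

lemma leg_eq {Δ' : SimplexCategory} (h : Δ'.len ≤ n) (ψ : Δ' ⟶ ⦋m⦌) (φ : Phi n m)
    (e : Δ' ⟶ (⦋(φ.1 : ℕ)⦌ : SimplexCategory)) (he : Epi e) (hw : e ≫ homOf φ = ψ) :
    leg b h ψ = b ≫ Pi.π _ φ ≫ K.map e.op := by
  have spec := (exists_fac h ψ).choose_spec.choose_spec
  obtain ⟨hφ, heq⟩ := fac_unique ψ (exists_fac h ψ).choose φ
    (exists_fac h ψ).choose_spec.choose e spec.1 he spec.2 hw
  subst hφ
  unfold leg
  rw [← heq]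
  simp

lemma bpi_f {a : X ⟶ L.obj (op (SimplexCategory.mk m))}
    (hab : a ≫ kappa n m L = b ≫ prodMap n f m) (φ : Phi n m) :
    b ≫ Pi.π _ φ ≫ f.app (op (SimplexCategory.mk (φ.1 : ℕ))) = a ≫ L.map (homOf φ).op := by
  have h := congrArg (fun u => u ≫ Pi.π _ φ) hab
  simp only [kappa, prodMap, Category.assoc, limit.lift_π, Fan.mk_π_app] at h
  exact h.symm

lemma compat_mono (h1 : ∀ p : ℕ, p < n → IsIso (f.app (op (SimplexCategory.mk p))))
    {a : X ⟶ L.obj (op (SimplexCategory.mk m))}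
    (hab : a ≫ kappa n m L = b ≫ prodMap n f m) (φ φ' : Phi n m)
    (β : (⦋(φ'.1 : ℕ)⦌ : SimplexCategory) ⟶ (⦋(φ.1 : ℕ)⦌ : SimplexCategory))
    (hβ : Mono β) (hw : β ≫ homOf φ = homOf φ') :
    b ≫ Pi.π _ φ ≫ K.map β.op = b ≫ Pi.π _ φ' := by
  by_cases hlt : (φ'.1 : ℕ) < n
  · haveI := h1 _ hlt
    rw [← cancel_mono (f.app (op (SimplexCategory.mk (φ'.1 : ℕ))))]
    have hnat : K.map β.op ≫ f.app (op (SimplexCategory.mk (φ'.1 : ℕ))) =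
        f.app (op (SimplexCategory.mk (φ.1 : ℕ))) ≫ L.map β.op := f.naturality β.op
    have A := bpi_f f b hab φ
    have A' := bpi_f f b hab φ'
    calc (b ≫ Pi.π _ φ ≫ K.map β.op) ≫ f.app (op (SimplexCategory.mk (φ'.1 : ℕ)))
        = (b ≫ Pi.π _ φ ≫ f.app (op (SimplexCategory.mk (φ.1 : ℕ)))) ≫ L.map β.op := by
          simp only [Category.assoc]; rw [hnat]
      _ = (a ≫ L.map (homOf φ).op) ≫ L.map β.op := by rw [A]
      _ = a ≫ L.map (homOf φ').op := by
          rw [← hw]; simp [← L.map_comp, ← op_comp]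
      _ = (b ≫ Pi.π _ φ') ≫ f.app (op (SimplexCategory.mk (φ'.1 : ℕ))) := by
          rw [Category.assoc, A']
  · have hn' : (φ'.1 : ℕ) = n := le_antisymm (Nat.lt_succ_iff.mp φ'.1.isLt) (not_lt.mp hlt)
    have hle : (φ'.1 : ℕ) ≤ (φ.1 : ℕ) := by
      simpa using SimplexCategory.len_le_of_mono β
    have hlt2 : (φ.1 : ℕ) < n + 1 := φ.1.isLt
    have hn : (φ.1 : ℕ) = n := by omega
    obtain ⟨i, d⟩ := φ
    obtain ⟨i', d'⟩ := φ'
    obtain rfl : i = i' := Fin.ext (by simp only at hn hn' ⊢; omega)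
    haveI := hβ
    have hid : β = 𝟙 _ := SimplexCategory.eq_id_of_mono β
    rw [hid, Category.id_comp] at hw
    obtain rfl : d = d' := homOf_data _ _ hw
    rw [hid]
    simp

end Leg


section Leg2
open SimplexCategory Simplicial

variable {C : Type*} [Category C] [HasFiniteLimits C]
  {K L : CategoryTheory.SimplicialObject C} {n m : ℕ} {X : C}
  (f : K ⟶ L)
  (b : X ⟶ ∏ᶜ fun φ : Phi n m => K.obj (op (SimplexCategory.mk (φ.1 : ℕ))))

lemma leg_comp_epi {Δ₁ Δ₂ : SimplexCategory} (h₁ : Δ₁.len ≤ n) (h₂ : Δ₂.len ≤ n)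
    (v : Δ₂ ⟶ Δ₁) (hv : Epi v) (ψ : Δ₁ ⟶ ⦋m⦌) :
    leg b h₁ ψ ≫ K.map v.op = leg b h₂ (v ≫ ψ) := by
  obtain ⟨φ, e, he, hw⟩ := exists_fac h₁ ψ
  haveI := he; haveI := hv
  rw [leg_eq b h₁ ψ φ e he hw,
      leg_eq b h₂ (v ≫ ψ) φ (v ≫ e) inferInstance (by rw [Category.assoc, hw])]
  simp [op_comp, Functor.map_comp]

lemma leg_comp_mono (h1 : ∀ p : ℕ, p < n → IsIso (f.app (op (SimplexCategory.mk p))))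
    {a : X ⟶ L.obj (op (SimplexCategory.mk m))}
    (hab : a ≫ kappa n m L = b ≫ prodMap n f m)
    {Δ₁ Δ₂ : SimplexCategory} (h₁ : Δ₁.len ≤ n) (h₂ : Δ₂.len ≤ n)
    (v : Δ₂ ⟶ Δ₁) (hv : Mono v) (ψ : Δ₁ ⟶ ⦋m⦌) :
    leg b h₁ ψ ≫ K.map v.op = leg b h₂ (v ≫ ψ) := by
  obtain ⟨φ₁, e₁, he₁, hw₁⟩ := exists_fac h₁ ψ
  haveI := he₁; haveI := hv
  have hImLen : (image (v ≫ e₁)).len ≤ n :=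
    le_trans (SimplexCategory.len_le_of_epi (factorThruImage (v ≫ e₁))) h₂
  obtain ⟨φ₂, e', he', hw'⟩ := exists_fac hImLen (image.ι (v ≫ e₁) ≫ homOf φ₁)
  haveI := he'
  haveI hm1 : Mono (image.ι (v ≫ e₁) ≫ homOf φ₁) := mono_comp _ _
  haveI hm2 : Mono e' := by
    have : Mono (e' ≫ homOf φ₂) := by rw [hw']; exact hm1
    exact mono_of_mono e' (homOf φ₂)
  haveI : IsIso e' := SimplexCategory.isIso_of_bijective
    ⟨SimplexCategory.mono_iff_injective.mp hm2, SimplexCategory.epi_iff_surjective.mp he'⟩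
  have hβw : (inv e' ≫ image.ι (v ≫ e₁)) ≫ homOf φ₁ = homOf φ₂ := by
    rw [Category.assoc, ← hw', IsIso.inv_hom_id_assoc]
  haveI : Mono (inv e' ≫ image.ι (v ≫ e₁)) := mono_comp _ _
  have hcomp := compat_mono f b h1 hab φ₁ φ₂ (inv e' ≫ image.ι (v ≫ e₁)) inferInstance hβw
  have harg : (factorThruImage (v ≫ e₁) ≫ e') ≫ (inv e' ≫ image.ι (v ≫ e₁)) = v ≫ e₁ := by
    rw [Category.assoc, IsIso.hom_inv_id_assoc, image.fac]
  rw [leg_eq b h₁ ψ φ₁ e₁ he₁ hw₁,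
      leg_eq b h₂ (v ≫ ψ) φ₂ (factorThruImage (v ≫ e₁) ≫ e') inferInstance (by
        rw [Category.assoc, hw', ← Category.assoc, image.fac, Category.assoc, hw₁])]
  calc (b ≫ Pi.π _ φ₁ ≫ K.map e₁.op) ≫ K.map v.op
      = b ≫ Pi.π _ φ₁ ≫ K.map ((v ≫ e₁)).op := by
        simp [op_comp, Functor.map_comp]
    _ = b ≫ Pi.π _ φ₁ ≫ K.map ((inv e' ≫ image.ι (v ≫ e₁)).op ≫
          (factorThruImage (v ≫ e₁) ≫ e').op) := by rw [← op_comp, harg]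
    _ = (b ≫ Pi.π _ φ₁ ≫ K.map (inv e' ≫ image.ι (v ≫ e₁)).op) ≫
          K.map (factorThruImage (v ≫ e₁) ≫ e').op := by
        simp [Functor.map_comp]
    _ = (b ≫ Pi.π _ φ₂) ≫ K.map (factorThruImage (v ≫ e₁) ≫ e').op := by rw [hcomp]
    _ = b ≫ Pi.π _ φ₂ ≫ K.map (factorThruImage (v ≫ e₁) ≫ e').op := by
        rw [Category.assoc]

lemma leg_comp (h1 : ∀ p : ℕ, p < n → IsIso (f.app (op (SimplexCategory.mk p))))
    {a : X ⟶ L.obj (op (SimplexCategory.mk m))}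
    (hab : a ≫ kappa n m L = b ≫ prodMap n f m)
    {Δ₁ Δ₂ : SimplexCategory} (h₁ : Δ₁.len ≤ n) (h₂ : Δ₂.len ≤ n)
    (v : Δ₂ ⟶ Δ₁) (ψ : Δ₁ ⟶ ⦋m⦌) :
    leg b h₁ ψ ≫ K.map v.op = leg b h₂ (v ≫ ψ) := by
  have hIm : (image v).len ≤ n :=
    le_trans (SimplexCategory.len_le_of_mono (image.ι v)) h₁
  have e1 := leg_comp_mono f b h1 hab h₁ hIm (image.ι v) inferInstance ψ
  have e2 := leg_comp_epi b hIm h₂ (factorThruImage v) inferInstance (image.ι v ≫ ψ)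
  calc leg b h₁ ψ ≫ K.map v.op
      = leg b h₁ ψ ≫ K.map (image.ι v).op ≫ K.map (factorThruImage v).op := by
        rw [← Functor.map_comp, ← op_comp, image.fac]
    _ = leg b hIm (image.ι v ≫ ψ) ≫ K.map (factorThruImage v).op := by
        rw [← Category.assoc, e1]
    _ = leg b h₂ (factorThruImage v ≫ image.ι v ≫ ψ) := e2
    _ = leg b h₂ (v ≫ ψ) := by rw [← Category.assoc, image.fac]

lemma leg_f {a : X ⟶ L.obj (op (SimplexCategory.mk m))}
    (hab : a ≫ kappa n m L = b ≫ prodMap n f m)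
    {Δ' : SimplexCategory} (h : Δ'.len ≤ n) (ψ : Δ' ⟶ ⦋m⦌) :
    leg b h ψ ≫ f.app (op Δ') = a ≫ L.map ψ.op := by
  obtain ⟨φ, e, he, hw⟩ := exists_fac h ψ
  rw [leg_eq b h ψ φ e he hw]
  have hnat : K.map e.op ≫ f.app (op Δ') =
      f.app (op (SimplexCategory.mk (φ.1 : ℕ))) ≫ L.map e.op := f.naturality e.op
  calc (b ≫ Pi.π _ φ ≫ K.map e.op) ≫ f.app (op Δ')
      = (b ≫ Pi.π _ φ ≫ f.app (op (SimplexCategory.mk (φ.1 : ℕ)))) ≫ L.map e.op := by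
        simp only [Category.assoc]; rw [hnat]
    _ = (a ≫ L.map (homOf φ).op) ≫ L.map e.op := by rw [bpi_f f b hab φ]
    _ = a ≫ L.map ψ.op := by rw [← hw]; simp [← L.map_comp, ← op_comp]

lemma leg_homOf (φ : Phi n m) (h : (SimplexCategory.mk (φ.1 : ℕ)).len ≤ n) :
    leg b h (homOf φ) = b ≫ Pi.π _ φ := by
  rw [leg_eq b h (homOf φ) φ (𝟙 _) inferInstance (Category.id_comp _)]
  simp

lemma kappa_pi (φ : Phi n m) :
    kappa n m K ≫ Pi.π _ φ = K.map (homOf φ).op := by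
  simp [kappa, homOf]

/-- The cone on `X` over the structured arrow diagram computing `(cosk_n K)_m`. -/
@[reducible]
noncomputable def legCone (h1 : ∀ p : ℕ, p < n → IsIso (f.app (op (SimplexCategory.mk p))))
    {a : X ⟶ L.obj (op (SimplexCategory.mk m))}
    (hab : a ≫ kappa n m L = b ≫ prodMap n f m) :
    Cone (StructuredArrow.proj (op (SimplexCategory.mk m))
        (SimplexCategory.Truncated.inclusion n).op ⋙
      ((SimplexCategory.Truncated.inclusion n).op ⋙ K)) where
  pt := X
  π :=
    { app := fun g => leg b g.right.unop.property g.hom.unop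
      naturality := fun g g' α => by
        dsimp
        rw [Category.id_comp]
        have hw : g'.hom.unop =
            (SimplexCategory.Truncated.inclusion n).map α.right.unop ≫ g.hom.unop := by
          rw [← StructuredArrow.w α]
          rfl
        rw [hw]
        exact (leg_comp f b h1 hab g.right.unop.property g'.right.unop.property
          ((SimplexCategory.Truncated.inclusion n).map α.right.unop) g.hom.unop).symm }

end Leg2

open CategoryTheory.Functor in
/-- Let `f : K ⟶ L` be a map of `n`-coskeletal simplicial objects which is
an isomorphism in degrees `< n`.  Then for every `m` the canonical map
`K_m ⟶ L_m ×_{∏_φ L_φ} ∏_φ K_φ` is an isomorphism; in particular `f_m = lift ≫ pullback.fst`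
exhibits each `f_m` as a base change of a finite product of copies of `f_n` and of
isomorphisms. -/
theorem isIso_pullbackLift
    (h1 : ∀ p : ℕ, p < n → IsIso (f.app (op (SimplexCategory.mk p))))
    (hK : IsIso ((SimplicialObject.coskAdj n).unit.app K))
    (hL : IsIso ((SimplicialObject.coskAdj n).unit.app L))
    (w : f.app (op (SimplexCategory.mk m)) ≫ kappa n m L =
      kappa n m K ≫ prodMap n f m) :
    IsIso (pullback.lift (f.app (op (SimplexCategory.mk m))) (kappa n m K) w) ∧
      pullback.lift (f.app (op (SimplexCategory.mk m))) (kappa n m K) w ≫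
          pullback.fst (kappa n m L) (prodMap n f m) =
        f.app (op (SimplexCategory.mk m)) := by
  haveI hK' : K.IsCoskeletal n := (SimplicialObject.isCoskeletal_iff_isIso K n).mpr hK
  haveI hL' : L.IsCoskeletal n := (SimplicialObject.isCoskeletal_iff_isIso L n).mpr hL
  have hKm : IsLimit ((RightExtension.mk K
      (𝟙 ((SimplexCategory.Truncated.inclusion n).op ⋙ K))).coneAt
        (op (SimplexCategory.mk m))) :=
    (Functor.isPointwiseRightKanExtensionOfIsRightKanExtension K
      (𝟙 ((SimplexCategory.Truncated.inclusion n).op ⋙ K))) (op (SimplexCategory.mk m))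
  have hLm : IsLimit ((RightExtension.mk L
      (𝟙 ((SimplexCategory.Truncated.inclusion n).op ⋙ L))).coneAt
        (op (SimplexCategory.mk m))) :=
    (Functor.isPointwiseRightKanExtensionOfIsRightKanExtension L
      (𝟙 ((SimplexCategory.Truncated.inclusion n).op ⋙ L))) (op (SimplexCategory.mk m))
  have coneKapp : ∀ g : StructuredArrow (op (SimplexCategory.mk m))
      (SimplexCategory.Truncated.inclusion n).op,
      ((RightExtension.mk K
        (𝟙 ((SimplexCategory.Truncated.inclusion n).op ⋙ K))).coneAt
          (op (SimplexCategory.mk m))).π.app g = K.map g.hom := by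
    intro g
    simp [RightExtension.coneAt]
    exact Category.comp_id _
  have coneLapp : ∀ g : StructuredArrow (op (SimplexCategory.mk m))
      (SimplexCategory.Truncated.inclusion n).op,
      ((RightExtension.mk L
        (𝟙 ((SimplexCategory.Truncated.inclusion n).op ⋙ L))).coneAt
          (op (SimplexCategory.mk m))).π.app g = L.map g.hom := by
    intro g
    simp [RightExtension.coneAt]
    exact Category.comp_id _
  have hPB : IsLimit (PullbackCone.mk (f.app (op (SimplexCategory.mk m))) (kappa n m K) w) := by
    refine PullbackCone.IsLimit.mk w (fun s => hKm.lift (legCone f s.snd h1 s.condition)) ?_ ?_ ?_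
    · intro s
      refine hLm.hom_ext fun g => ?_
      have hfacK := hKm.fac (legCone f s.snd h1 s.condition) g
      rw [coneKapp] at hfacK
      rw [coneLapp g]
      have hnat : f.app (op (SimplexCategory.mk m)) ≫ L.map g.hom =
          K.map g.hom ≫ f.app (((SimplexCategory.Truncated.inclusion n).op).obj g.right) :=
        (f.naturality g.hom).symm
      calc (hKm.lift (legCone f s.snd h1 s.condition) ≫ f.app (op (SimplexCategory.mk m))) ≫
            L.map g.hom
          = hKm.lift (legCone f s.snd h1 s.condition) ≫ K.map g.hom ≫
              f.app (((SimplexCategory.Truncated.inclusion n).op).obj g.right) := by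
            erw [Category.assoc, hnat]
            rfl
        _ = leg s.snd g.right.unop.property g.hom.unop ≫
              f.app (((SimplexCategory.Truncated.inclusion n).op).obj g.right) := by
            erw [← Category.assoc, hfacK]
            rfl
        _ = s.fst ≫ L.map (g.hom.unop).op := leg_f f s.snd s.condition _ _
        _ = s.fst ≫ L.map g.hom := by rw [Quiver.Hom.op_unop]
    · intro s
      refine Pi.hom_ext _ _ fun φ => ?_
      have hlen : (SimplexCategory.mk (φ.1 : ℕ)).len ≤ n := by
        simpa using Nat.lt_succ_iff.mp φ.1.isLt
      have hfac := hKm.fac (legCone f s.snd h1 s.condition)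
        (StructuredArrow.mk
          (Y := op (⟨SimplexCategory.mk (φ.1 : ℕ), hlen⟩ : SimplexCategory.Truncated n))
          ((homOf φ).op))
      rw [coneKapp] at hfac
      have hfac' : hKm.lift (legCone f s.snd h1 s.condition) ≫ K.map (homOf φ).op
          = leg s.snd hlen (homOf φ) := hfac
      erw [Category.assoc, kappa_pi, hfac', leg_homOf s.snd φ hlen]
    · intro s t ht1 ht2
      refine hKm.hom_ext fun g => ?_
      have hfacK := hKm.fac (legCone f s.snd h1 s.condition) g
      rw [coneKapp] at hfacK ⊢
      erw [hfacK]
      have hcone : (legCone f s.snd h1 s.condition).π.app g =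
          leg s.snd g.right.unop.property g.hom.unop := rfl
      rw [hcone]
      obtain ⟨φ, e, he, hw⟩ := exists_fac (g.right.unop.property) g.hom.unop
      rw [leg_eq s.snd _ _ φ e he hw]
      have hg : g.hom = (homOf φ).op ≫ e.op := by
        rw [← op_comp, hw, Quiver.Hom.op_unop]
      have hkey : t ≫ K.map (homOf φ).op = s.snd ≫ Pi.π _ φ := by
        rw [← kappa_pi, ← Category.assoc, ht2]
      erw [hg, Functor.map_comp, ← Category.assoc, hkey, Category.assoc]
      rfl
  refine ⟨?_, pullback.lift_fst _ _ _⟩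
  have hr1 : PullbackCone.IsLimit.lift hPB (pullback.fst (kappa n m L) (prodMap n f m))
      (pullback.snd _ _) pullback.condition ≫ f.app (op (SimplexCategory.mk m)) =
      pullback.fst (kappa n m L) (prodMap n f m) := by
    simpa using PullbackCone.IsLimit.lift_fst hPB (pullback.fst (kappa n m L) (prodMap n f m))
      (pullback.snd _ _) pullback.condition
  have hr2 : PullbackCone.IsLimit.lift hPB (pullback.fst (kappa n m L) (prodMap n f m))
      (pullback.snd _ _) pullback.condition ≫ kappa n m K =
      pullback.snd (kappa n m L) (prodMap n f m) := by
    simpa using PullbackCone.IsLimit.lift_snd hPB (pullback.fst (kappa n m L) (prodMap n f m))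
      (pullback.snd _ _) pullback.condition
  refine ⟨⟨PullbackCone.IsLimit.lift hPB (pullback.fst (kappa n m L) (prodMap n f m))
      (pullback.snd _ _) pullback.condition, ?_, ?_⟩⟩
  · refine PullbackCone.IsLimit.hom_ext hPB ?_ ?_
    · simp only [Category.assoc, PullbackCone.mk_fst, Category.id_comp]
      erw [Category.assoc, hr1, pullback.lift_fst]
      exact (Category.id_comp _).symm
    · simp only [Category.assoc, PullbackCone.mk_snd, Category.id_comp]
      erw [Category.assoc, hr2, pullback.lift_snd]
      exact (Category.id_comp _).symm
  · refine pullback.hom_ext ?_ ?_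
    · simp only [Category.assoc, Category.id_comp]
      erw [Category.assoc, pullback.lift_fst, hr1]
    · simp only [Category.assoc, Category.id_comp]
      erw [Category.assoc, pullback.lift_snd, hr2]

end Stmt6
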